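/- arXiv:1010.1703 — 3 statements merged into one kernel-verified Lean document; each statement's English description precedes it below -/
import Mathlib

section
/- Let A be a second-order elliptic operator Au = ∑ᵢⱼ aᵢⱼ∂ᵢⱼu + ∑ⱼ bⱼ∂ⱼu + cu with a(x) symmetric positive semidefinite, c ≤ 0, acting on C²-functions. If u : Ω → ℂ is C² on an open set Ω and x₀ ∈ Ω is such that |u(x₀)| ≥ |u(x)| for all x in a ball B around x₀ contained in Ω, and Au is continuous on B, then Re( conj(u(x₀)) · (Au)(x₀) ) ≤ 0. -/
open scoped BigOperators ComplexConjugate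

lemma aux_second_deriv_nonpos {g g' : ℝ → ℝ} {C : ℝ}
    (hg : ∀ᶠ t in nhds (0:ℝ), HasDerivAt g (g' t) t)
    (hg' : HasDerivAt g' C 0)
    (hmax : ∀ᶠ t in nhds (0:ℝ), g t ≤ g 0) : C ≤ 0 := by
  by_contra hC
  push_neg at hC
  have hmax' : IsLocalMax g 0 := hmax
  have hder0 : g' 0 = 0 := by
    have := hmax'.deriv_eq_zero
    rwa [(hg.self_of_nhds).deriv] at this
  have hslope : Filter.Tendsto (fun t => g' t / t) (nhdsWithin 0 {(0:ℝ)}ᶜ) (nhds C) := by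
    have := hasDerivAt_iff_tendsto_slope.1 hg'
    refine this.congr fun t => ?_
    simp [slope, hder0, div_eq_inv_mul]
  have hpos : ∀ᶠ t in nhdsWithin 0 {(0:ℝ)}ᶜ, 0 < g' t / t :=
    hslope.eventually (eventually_gt_nhds hC)
  rw [eventually_nhdsWithin_iff] at hpos
  obtain ⟨δ, hδ, hδall⟩ := Metric.eventually_nhds_iff.1 (hpos.and (hg.and hmax))
  set ε := δ/2 with hε
  have hεpos : 0 < ε := by positivity
  have hεδ : ∀ t ∈ Set.Icc (0:ℝ) ε, dist t (0:ℝ) < δ := by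
    intro t ht
    rw [Real.dist_eq, sub_zero, abs_of_nonneg ht.1]
    calc t ≤ ε := ht.2
    _ < δ := by rw [hε]; linarith
  have hmono : StrictMonoOn g (Set.Icc 0 ε) := by
    apply strictMonoOn_of_deriv_pos (convex_Icc 0 ε)
    · intro t ht
      exact ((hδall (hεδ t ht)).2.1).continuousAt.continuousWithinAt
    · intro t ht
      rw [interior_Icc] at ht
      have h1 := hδall (hεδ t ⟨le_of_lt ht.1, le_of_lt ht.2⟩)
      have h2 := h1.1 (by simp [ne_of_gt ht.1])
      rw [h1.2.1.deriv]
      have := mul_pos h2 ht.1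
      rwa [div_mul_cancel₀] at this
      exact ne_of_gt ht.1
  have : g 0 < g ε := hmono (Set.left_mem_Icc.2 (le_of_lt hεpos)) (Set.right_mem_Icc.2 (le_of_lt hεpos)) hεpos
  have hle : g ε ≤ g 0 := (hδall (hεδ ε (Set.right_mem_Icc.2 (le_of_lt hεpos)))).2.2
  linarith

set_option maxHeartbeats 1000000 in
/-- Interior complex maximum principle inequality (Lemma 3.2): at an interior point
`x₀` where `|u|` is maximal over a ball, one has `Re(conj(u(x₀)) · (Au)(x₀)) ≤ 0`. -/
theorem complex_interior_maximum_inequality {n : ℕ}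
    (Ω : Set (EuclideanSpace ℝ (Fin n))) (hΩ : IsOpen Ω)
    (a : EuclideanSpace ℝ (Fin n) → Matrix (Fin n) (Fin n) ℝ)
    (b : EuclideanSpace ℝ (Fin n) → Fin n → ℝ)
    (c : EuclideanSpace ℝ (Fin n) → ℝ)
    (ha_cont : ∀ i j, ContinuousOn (fun x => a x i j) Ω)
    (ha_symm : ∀ x i j, a x i j = a x j i)
    (Λ : ℝ) (hΛ : 0 < Λ)
    (hell : ∀ x ∈ Ω, ∀ ξ : EuclideanSpace ℝ (Fin n),
      Λ * ‖ξ‖ ^ 2 ≤ ∑ i, ∑ j, a x i j * ξ i * ξ j)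
    (hb_bdd : ∃ C : ℝ, ∀ x j, |b x j| ≤ C) (hc_bdd : ∃ C : ℝ, ∀ x, |c x| ≤ C)
    (hc : ∀ x, c x ≤ 0)
    (u : EuclideanSpace ℝ (Fin n) → ℂ) (hu : ContDiffOn ℝ 2 u Ω)
    (Au : EuclideanSpace ℝ (Fin n) → ℂ)
    (hAu : ∀ x ∈ Ω, Au x =
      (∑ i, ∑ j, (a x i j : ℂ) *
        fderiv ℝ (fun y => fderiv ℝ u y (EuclideanSpace.single j 1)) x
          (EuclideanSpace.single i 1)) +
      (∑ j, (b x j : ℂ) * fderiv ℝ u x (EuclideanSpace.single j 1)) +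
      (c x : ℂ) * u x)
    (x₀ : EuclideanSpace ℝ (Fin n)) (r : ℝ) (hr : 0 < r)
    (hball : Metric.ball x₀ r ⊆ Ω)
    (hmax : ∀ x ∈ Metric.ball x₀ r, ‖u x‖ ≤ ‖u x₀‖)
    (hAu_cont : ContinuousOn Au (Metric.ball x₀ r)) :
    (conj (u x₀) * Au x₀).re ≤ 0 := by
  classical
  have hx₀Ω : x₀ ∈ Ω := hball (Metric.mem_ball_self hr)
  set z₀ := u x₀ with hz₀
  set L : ℂ →L[ℝ] ℝ := Complex.reCLM.comp ((ContinuousLinearMap.mul ℝ ℂ) (conj z₀)) with hLdef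
  have hLapp : ∀ w : ℂ, L w = (conj z₀ * w).re := fun w => rfl
  set v : EuclideanSpace ℝ (Fin n) → ℝ := fun x => L (u x) with hv
  have hvC2 : ContDiffOn ℝ 2 v Ω := hu.continuousLinearMap_comp L
  have hudiff : DifferentiableOn ℝ u Ω := hu.differentiableOn (by norm_num)
  have hvdiff : DifferentiableOn ℝ v Ω := hvC2.differentiableOn (by norm_num)
  have hu1 : ContDiffOn ℝ 1 (fun y => fderiv ℝ u y) Ω := hu.fderiv_of_isOpen (m := 1) hΩ (by norm_num)
  have hv1 : ContDiffOn ℝ 1 (fun y => fderiv ℝ v y) Ω := hvC2.fderiv_of_isOpen (m := 1) hΩ (by norm_num)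
  have hu1d : DifferentiableAt ℝ (fun y => fderiv ℝ u y) x₀ :=
    (hu1.differentiableOn (by norm_num)).differentiableAt (hΩ.mem_nhds hx₀Ω)
  have hv1d : DifferentiableAt ℝ (fun y => fderiv ℝ v y) x₀ :=
    (hv1.differentiableOn (by norm_num)).differentiableAt (hΩ.mem_nhds hx₀Ω)
  -- fderiv of v in terms of u on Ω
  have hfv : ∀ x ∈ Ω, fderiv ℝ v x = L.comp (fderiv ℝ u x) := by
    intro x hx
    have hux : DifferentiableAt ℝ u x := hudiff.differentiableAt (hΩ.mem_nhds hx)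
    rw [show v = L ∘ u from rfl, fderiv_comp x L.differentiableAt hux, L.fderiv]
  -- local max of v at x₀
  have hvmax : ∀ x ∈ Metric.ball x₀ r, v x ≤ v x₀ := by
    intro x hx
    have h1 : v x ≤ ‖z₀‖ * ‖u x‖ := by
      show (conj z₀ * u x).re ≤ _
      calc (conj z₀ * u x).re ≤ ‖conj z₀ * u x‖ := Complex.re_le_norm _
      _ = ‖z₀‖ * ‖u x‖ := by rw [norm_mul, RCLike.norm_conj]
    have h2 : v x₀ = ‖z₀‖ * ‖z₀‖ := by
      show (conj z₀ * z₀).re = ‖z₀‖ * ‖z₀‖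
      rw [mul_comm, Complex.mul_conj, Complex.ofReal_re, Complex.normSq_eq_norm_sq,
        sq]
    rw [h2]
    calc v x ≤ ‖z₀‖ * ‖u x‖ := h1
    _ ≤ ‖z₀‖ * ‖z₀‖ := by
      apply mul_le_mul_of_nonneg_left (hmax x hx) (norm_nonneg _)
  have hlocmax : IsLocalMax v x₀ := by
    filter_upwards [Metric.ball_mem_nhds x₀ hr] with x hx using hvmax x hx
  have hfv0 : fderiv ℝ v x₀ = 0 := hlocmax.fderiv_eq_zero
  set F := fderiv ℝ (fun y => fderiv ℝ v y) x₀ with hF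
  -- second derivative quadratic form is nonpositive
  have hFneg : ∀ ξ : EuclideanSpace ℝ (Fin n), F ξ ξ ≤ 0 := by
    intro ξ
    have hline : ∀ t : ℝ, HasDerivAt (fun s : ℝ => x₀ + s • ξ) ξ t := by
      intro t
      simpa using ((hasDerivAt_id t).smul_const ξ).const_add x₀
    have hmem : ∀ᶠ t in nhds (0:ℝ), x₀ + t • ξ ∈ Metric.ball x₀ r := by
      have hcont : Continuous fun t : ℝ => x₀ + t • ξ := continuous_const.add (continuous_id.smul continuous_const)
      have h0 : Metric.ball x₀ r ∈ nhds (x₀ + (0:ℝ) • ξ) := by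
        rw [zero_smul, add_zero]
        exact Metric.isOpen_ball.mem_nhds (Metric.mem_ball_self hr)
      exact hcont.continuousAt.preimage_mem_nhds h0
    apply aux_second_deriv_nonpos (g := fun t => v (x₀ + t • ξ))
      (g' := fun t => fderiv ℝ v (x₀ + t • ξ) ξ)
    · filter_upwards [hmem] with t ht
      have : DifferentiableAt ℝ v (x₀ + t • ξ) :=
        hvdiff.differentiableAt (hΩ.mem_nhds (hball ht))
      exact this.hasFDerivAt.comp_hasDerivAt t (hline t)
    · have hfd : HasFDerivAt (fun y => fderiv ℝ v y) F (x₀ + (0:ℝ) • ξ) := by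
        rw [zero_smul, add_zero]; exact hv1d.hasFDerivAt
      have h1 : HasDerivAt (fun t : ℝ => fderiv ℝ v (x₀ + t • ξ)) (F ξ) 0 :=
        hfd.comp_hasDerivAt 0 (hline 0)
      have := (ContinuousLinearMap.apply ℝ ℝ ξ).hasFDerivAt.comp_hasDerivAt 0 h1
      exact this
    · filter_upwards [hmem] with t ht
      have := hvmax _ ht
      simpa using this
  -- link F to second derivatives of u
  set G := fderiv ℝ (fun y => fderiv ℝ u y) x₀ with hG
  have hFu : ∀ ξ η : EuclideanSpace ℝ (Fin n), F ξ η = L (fderiv ℝ (fun y => fderiv ℝ u y η) x₀ ξ) := by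
    intro ξ η
    have hEq : (fun y => fderiv ℝ v y) =ᶠ[nhds x₀]
        (fun y => (ContinuousLinearMap.compL ℝ (EuclideanSpace ℝ (Fin n)) ℂ ℝ L) (fderiv ℝ u y)) := by
      filter_upwards [hΩ.mem_nhds hx₀Ω] with y hy
      rw [hfv y hy, ContinuousLinearMap.compL_apply]
    have h2 : F = ((ContinuousLinearMap.compL ℝ (EuclideanSpace ℝ (Fin n)) ℂ ℝ L).comp G) := by
      rw [hF, hEq.fderiv_eq]
      rw [show (fun y => (ContinuousLinearMap.compL ℝ (EuclideanSpace ℝ (Fin n)) ℂ ℝ L) (fderiv ℝ u y))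
        = (ContinuousLinearMap.compL ℝ (EuclideanSpace ℝ (Fin n)) ℂ ℝ L) ∘ (fun y => fderiv ℝ u y) from rfl,
        fderiv_comp x₀ (ContinuousLinearMap.compL ℝ (EuclideanSpace ℝ (Fin n)) ℂ ℝ L).differentiableAt hu1d,
        ContinuousLinearMap.fderiv]
    have h3 : fderiv ℝ (fun y => fderiv ℝ u y η) x₀ =
        (ContinuousLinearMap.apply ℝ ℂ η).comp G := by
      rw [show (fun y => fderiv ℝ u y η)
        = (ContinuousLinearMap.apply ℝ ℂ η) ∘ (fun y => fderiv ℝ u y) from rfl,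
        fderiv_comp x₀ (ContinuousLinearMap.apply ℝ ℂ η).differentiableAt hu1d,
        ContinuousLinearMap.fderiv]
    rw [h2, h3]
    simp
  -- first derivatives of u paired with conj z₀ vanish
  have hfu0 : ∀ η : EuclideanSpace ℝ (Fin n), L (fderiv ℝ u x₀ η) = 0 := by
    intro η
    have := hfv x₀ hx₀Ω
    rw [hfv0] at this
    have := congrArg (fun (T : EuclideanSpace ℝ (Fin n) →L[ℝ] ℝ) => T η) this.symm
    simpa using this
  -- positive semidefiniteness of a x₀
  have hA_psd : (a x₀).PosSemidef := by
    refine Matrix.PosSemidef.of_dotProduct_mulVec_nonneg ?_ ?_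
    · ext i j
      rw [Matrix.conjTranspose_apply, star_trivial]
      exact ha_symm x₀ j i
    · intro x
      have hξ := hell x₀ hx₀Ω ((WithLp.equiv 2 (Fin n → ℝ)).symm x)
      have hnn : (0:ℝ) ≤ Λ * ‖(WithLp.equiv 2 (Fin n → ℝ)).symm x‖ ^ 2 := by positivity
      have heq : ∑ i, ∑ j, a x₀ i j * ((WithLp.equiv 2 (Fin n → ℝ)).symm x) i
          * ((WithLp.equiv 2 (Fin n → ℝ)).symm x) j = dotProduct (star x) (Matrix.mulVec (a x₀) x) := by
        simp only [WithLp.equiv_symm_apply, WithLp.ofLp_toLp, dotProduct, Pi.star_apply, star_trivial,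
          Matrix.mulVec, Finset.mul_sum]
        refine Finset.sum_congr rfl fun i _ => ?_
        refine Finset.sum_congr rfl fun j _ => ?_
        ring
      rw [← heq]
      exact le_trans hnn hξ
  set S := (open scoped MatrixOrder in CFC.sqrt (a x₀)) with hSdef
  have hS2 : S * S = a x₀ := open scoped MatrixOrder in CFC.sqrt_mul_sqrt_self (a x₀) hA_psd.nonneg
  have hSsymm : ∀ i j, S i j = S j i := by
    intro i j
    have := (open scoped MatrixOrder in Matrix.nonneg_iff_posSemidef.mp (CFC.sqrt_nonneg (a x₀))).1.apply i j
    rw [star_trivial] at this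
    exact this.symm
  set ξv : Fin n → EuclideanSpace ℝ (Fin n) :=
    fun k => ∑ i, S k i • EuclideanSpace.single i 1 with hξv
  have hbil : ∀ k, F (ξv k) (ξv k) = ∑ i, ∑ j, S k i * S k j *
      F (EuclideanSpace.single i 1) (EuclideanSpace.single j 1) := by
    intro k
    rw [hξv]
    simp only [map_sum, map_smul, ContinuousLinearMap.coe_sum', Finset.sum_apply,
      ContinuousLinearMap.coe_smul', Pi.smul_apply, smul_eq_mul, Finset.mul_sum]
    rw [Finset.sum_comm]
    refine Finset.sum_congr rfl fun i _ => Finset.sum_congr rfl fun j _ => ?_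
    ring
  set w : Fin n → Fin n → ℂ := fun i j =>
    fderiv ℝ (fun y => fderiv ℝ u y (EuclideanSpace.single j 1)) x₀
      (EuclideanSpace.single i 1) with hw
  have hLw : ∀ i j, L (w i j) =
      F (EuclideanSpace.single i 1) (EuclideanSpace.single j 1) :=
    fun i j => (hFu _ _).symm
  have htrace : ∑ i, ∑ j, a x₀ i j * L (w i j) ≤ 0 := by
    have hsum : ∑ i, ∑ j, a x₀ i j * L (w i j) = ∑ k, F (ξv k) (ξv k) := by
      simp_rw [hLw, hbil]
      calc ∑ i, ∑ j, a x₀ i j *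
            F (EuclideanSpace.single i 1) (EuclideanSpace.single j 1)
          = ∑ i, ∑ j, ∑ k, S k i * S k j *
            F (EuclideanSpace.single i 1) (EuclideanSpace.single j 1) := by
            refine Finset.sum_congr rfl fun i _ => Finset.sum_congr rfl fun j _ => ?_
            rw [← hS2, Matrix.mul_apply, Finset.sum_mul]
            refine Finset.sum_congr rfl fun k _ => ?_
            rw [hSsymm i k]
        _ = ∑ i, ∑ k, ∑ j, S k i * S k j *
            F (EuclideanSpace.single i 1) (EuclideanSpace.single j 1) := by
            exact Finset.sum_congr rfl fun i _ => Finset.sum_comm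
        _ = ∑ k, ∑ i, ∑ j, S k i * S k j *
            F (EuclideanSpace.single i 1) (EuclideanSpace.single j 1) :=
            Finset.sum_comm
    rw [hsum]
    exact Finset.sum_nonpos fun k _ => hFneg (ξv k)
  -- final assembly
  rw [hAu x₀ hx₀Ω]
  have hre2 : (conj z₀ * ∑ i, ∑ j, (a x₀ i j : ℂ) * w i j).re
      = ∑ i, ∑ j, a x₀ i j * L (w i j) := by
    rw [Finset.mul_sum, Complex.re_sum]
    refine Finset.sum_congr rfl fun i _ => ?_
    rw [Finset.mul_sum, Complex.re_sum]
    refine Finset.sum_congr rfl fun j _ => ?_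
    rw [hLapp, show conj z₀ * ((a x₀ i j : ℂ) * w i j)
      = (a x₀ i j : ℂ) * (conj z₀ * w i j) by ring, Complex.re_ofReal_mul]
  have hre1 : (conj z₀ * ∑ j, (b x₀ j : ℂ) * fderiv ℝ u x₀ (EuclideanSpace.single j 1)).re
      = 0 := by
    rw [Finset.mul_sum, Complex.re_sum]
    refine Finset.sum_eq_zero fun j _ => ?_
    rw [show conj z₀ * ((b x₀ j : ℂ) * fderiv ℝ u x₀ (EuclideanSpace.single j 1))
      = (b x₀ j : ℂ) * (conj z₀ * fderiv ℝ u x₀ (EuclideanSpace.single j 1)) by ring,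
      Complex.re_ofReal_mul, ← hLapp, hfu0, mul_zero]
  have hre0 : (conj z₀ * ((c x₀ : ℂ) * z₀)).re ≤ 0 := by
    rw [show conj z₀ * ((c x₀ : ℂ) * z₀) = (c x₀ : ℂ) * (conj z₀ * z₀) by ring,
      Complex.re_ofReal_mul]
    have hnn : 0 ≤ (conj z₀ * z₀).re := by
      rw [mul_comm, Complex.mul_conj, Complex.ofReal_re]
      exact Complex.normSq_nonneg z₀
    exact mul_nonpos_of_nonpos_of_nonneg (hc x₀) hnn
  rw [mul_add, mul_add, Complex.add_re, Complex.add_re, hre2, hre1]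
  linarith
end

section
/- (Ehrling's lemma) Let X, Y, Z be normed spaces with a compact linear embedding i : X → Y and an injective continuous linear embedding j : Y → Z. Then for every ε > 0 there exists C_ε ≥ 0 such that ‖i(u)‖_Y ≤ ε‖u‖_X + C_ε‖j(i(u))‖_Z for all u ∈ X. -/
/-- Ehrling's lemma: given a compact embedding `i : X → Y` and an injective continuous
embedding `j : Y → Z`, for every `ε > 0` there is `C_ε ≥ 0` with
`‖i u‖ ≤ ε ‖u‖ + C_ε ‖j (i u)‖` for all `u`. -/
theorem ehrling_lemma {X Y Z : Type*}
    [NormedAddCommGroup X] [NormedSpace ℝ X] [CompleteSpace X]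
    [NormedAddCommGroup Y] [NormedSpace ℝ Y]
    [NormedAddCommGroup Z] [NormedSpace ℝ Z]
    (i : X →L[ℝ] Y) (hi : IsCompactOperator i)
    (j : Y →L[ℝ] Z) (hj : Function.Injective j) :
    ∀ ε > (0 : ℝ), ∃ Cε ≥ (0 : ℝ), ∀ u : X,
      ‖i u‖ ≤ ε * ‖u‖ + Cε * ‖j (i u)‖ := by
  intro ε hε
  by_contra h
  push_neg at h
  -- For each n, get a unit vector w n with ‖i (w n)‖ > ε + n * ‖j (i (w n))‖
  have key : ∀ n : ℕ, ∃ w : X, ‖w‖ = 1 ∧ ε + n * ‖j (i w)‖ < ‖i w‖ := by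
    intro n
    obtain ⟨u, hu⟩ := h n (Nat.cast_nonneg n)
    have hu0 : u ≠ 0 := by
      rintro rfl
      simp at hu
    have hnu : (0 : ℝ) < ‖u‖ := norm_pos_iff.mpr hu0
    refine ⟨‖u‖⁻¹ • u, ?_, ?_⟩
    · simp [norm_smul, abs_of_nonneg, inv_mul_cancel₀ hnu.ne']
    · have h1 : i (‖u‖⁻¹ • u) = ‖u‖⁻¹ • i u := by simp
      have h2 : j (i (‖u‖⁻¹ • u)) = ‖u‖⁻¹ • j (i u) := by simp
      rw [h2, h1, norm_smul, norm_smul]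
      simp only [norm_inv, norm_norm]
      rw [show ε + ↑n * (‖u‖⁻¹ * ‖j (i u)‖) = (ε * ‖u‖ + ↑n * ‖j (i u)‖) * ‖u‖⁻¹ by
        field_simp]
      rw [show ‖u‖⁻¹ * ‖i u‖ = ‖i u‖ * ‖u‖⁻¹ by ring]
      exact mul_lt_mul_of_pos_right hu (inv_pos.mpr hnu)
  choose w hw1 hw2 using key
  -- i (w n) lies in the compact closure of the image of the closed unit ball
  have hK : IsCompact (closure ((i : X →ₗ[ℝ] Y) '' Metric.closedBall 0 1)) :=
    IsCompactOperator.isCompact_closure_image_closedBall (𝕜₁ := ℝ) hi 1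
  have hmem : ∀ n, i (w n) ∈ closure ((i : X →ₗ[ℝ] Y) '' Metric.closedBall 0 1) := fun n =>
    subset_closure ⟨w n, by simp [hw1 n], rfl⟩
  obtain ⟨y, -, φ, hφ, hconv⟩ := hK.tendsto_subseq hmem
  -- j (i (w n)) → 0
  have hbound : ∀ n : ℕ, ‖i (w n)‖ ≤ ‖i‖ := fun n => by
    simpa [hw1 n] using i.le_opNorm (w n)
  have hj0 : Filter.Tendsto (fun n => j (i (w n))) Filter.atTop (nhds 0) := by
    rw [tendsto_zero_iff_norm_tendsto_zero]
    apply squeeze_zero' (Filter.Eventually.of_forall fun n => norm_nonneg _)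
      (g := fun n : ℕ => ‖i‖ / n)
    · filter_upwards [Filter.eventually_ge_atTop 1] with n hn
      have hn0 : (0 : ℝ) < n := by exact_mod_cast hn
      rw [le_div_iff₀ hn0]
      have := (hw2 n).le.trans (hbound n)
      nlinarith [norm_nonneg (j (i (w n)))]
    · exact tendsto_const_div_atTop_nhds_zero_nat ‖i‖
  -- along the subsequence, j (i (w (φ n))) → j y and → 0
  have h1 : Filter.Tendsto (fun n => j (i (w (φ n)))) Filter.atTop (nhds (j y)) :=
    (j.continuous.tendsto y).comp hconv
  have h2 : Filter.Tendsto (fun n => j (i (w (φ n)))) Filter.atTop (nhds 0) :=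
    hj0.comp hφ.tendsto_atTop
  have hjy : j y = 0 := tendsto_nhds_unique h1 h2
  have hy0 : y = 0 := hj (by simpa using hjy)
  -- but ‖y‖ ≥ ε since ‖i (w (φ n))‖ > ε
  have hnorm : Filter.Tendsto (fun n => ‖i (w (φ n))‖) Filter.atTop (nhds ‖y‖) :=
    (continuous_norm.tendsto y).comp hconv
  have : ε ≤ ‖y‖ := by
    apply le_of_tendsto_of_tendsto tendsto_const_nhds hnorm
    filter_upwards with n
    have := hw2 (φ n)
    nlinarith [norm_nonneg (j (i (w (φ n)))), (Nat.cast_nonneg (φ n) : (0:ℝ) ≤ _)]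
  rw [hy0, norm_zero] at this
  linarith
end

section
/- Let A be a linear operator on C(closure Ω) (Ω bounded open in ℝⁿ) such that: (i) for every λ with Re λ > ω and every f, the equation λu − Au = f has a solution v on a larger region with ‖λv‖_∞ ≤ M‖f‖_∞; (ii) solutions w of λw − Aw = 0 on Ω that are continuous up to the boundary satisfy ‖w‖_{C(closure Ω)} = max_{∂Ω}|w|. Then any solution u ∈ C₀(Ω) of λu − Au = f satisfies ‖u‖_∞ ≤ (2M/|λ|)‖f‖_∞. -/
/-- The abstract mechanism of Theorem 3.1: a solution `v` of the resolvent equation on a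
larger region with sectorial bound, together with the boundary maximum principle for
`λ`-harmonic functions, yields the estimate `‖u‖_∞ ≤ (2M/|λ|) ‖f‖_∞` for solutions
`u ∈ C₀(Ω)` of `λ u - A u = f`. -/
theorem sectorial_estimate_transfer {n : ℕ}
    (Ω : Set (EuclideanSpace ℝ (Fin n))) (hΩo : IsOpen Ω)
    (hΩb : Bornology.IsBounded Ω)
    (A : (EuclideanSpace ℝ (Fin n) → ℂ) →ₗ[ℂ] (EuclideanSpace ℝ (Fin n) → ℂ))
    (lam : ℂ) (hlam : 0 < lam.re)
    (M F : ℝ) (hM : 0 < M) (hF : 0 ≤ F)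
    (f u v : EuclideanSpace ℝ (Fin n) → ℂ)
    (hf_bdd : ∀ x ∈ closure Ω, ‖f x‖ ≤ F)
    -- (i) `v` solves the resolvent equation on the larger region, with sectorial bound
    (hv_cont : ContinuousOn v (closure Ω))
    (hv_sol : ∀ x ∈ closure Ω, lam * v x - A v x = f x)
    (hv_bdd : ∀ x ∈ closure Ω, ‖lam‖ * ‖v x‖ ≤ M * F)
    -- (ii) the maximum principle for solutions of `λ w - A w = 0`
    (hmaxprin : ∀ w : EuclideanSpace ℝ (Fin n) → ℂ,
      ContinuousOn w (closure Ω) → (∀ x ∈ Ω, lam * w x - A w x = 0) →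
      ∃ z ∈ frontier Ω, ∀ x ∈ closure Ω, ‖w x‖ ≤ ‖w z‖)
    -- `u ∈ C₀(Ω)` solves `λ u - A u = f` on `Ω`
    (hu_cont : ContinuousOn u (closure Ω))
    (hu_bd : ∀ x ∈ frontier Ω, u x = 0)
    (hu_sol : ∀ x ∈ Ω, lam * u x - A u x = f x)
    (hAw : A (v - u) = A v - A u) :
    ∀ x ∈ closure Ω, ‖u x‖ ≤ (2 * M / ‖lam‖) * F := by
  have hlam0 : 0 < ‖lam‖ := by
    rw [norm_pos_iff]
    intro h; rw [h] at hlam; simp at hlam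
  have hsub : Ω ⊆ closure Ω := subset_closure
  have hfr : frontier Ω ⊆ closure Ω := frontier_subset_closure
  have hw_cont : ContinuousOn (v - u) (closure Ω) := hv_cont.sub hu_cont
  have hw_sol : ∀ x ∈ Ω, lam * (v - u) x - A (v - u) x = 0 := by
    intro x hx
    rw [hAw]
    have h1 := hv_sol x (hsub hx)
    have h2 := hu_sol x hx
    simp only [Pi.sub_apply]
    linear_combination h1 - h2
  obtain ⟨z, hz, hmax⟩ := hmaxprin (v - u) hw_cont hw_sol
  have hwz : ‖(v - u) z‖ ≤ M * F / ‖lam‖ := by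
    have : (v - u) z = v z := by simp [hu_bd z hz]
    rw [this]
    rw [le_div_iff₀ hlam0, mul_comm]
    exact hv_bdd z (hfr hz)
  intro x hx
  have hvx : ‖v x‖ ≤ M * F / ‖lam‖ := by
    rw [le_div_iff₀ hlam0, mul_comm]
    exact hv_bdd x hx
  have : ‖u x‖ ≤ ‖(v - u) x‖ + ‖v x‖ := by
    have : u x = v x - (v - u) x := by simp
    rw [this]
    exact (norm_sub_le _ _).trans (by rw [add_comm])
  calc ‖u x‖ ≤ ‖(v - u) x‖ + ‖v x‖ := this
    _ ≤ M * F / ‖lam‖ + M * F / ‖lam‖ := add_le_add ((hmax x hx).trans hwz) hvx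
    _ = (2 * M / ‖lam‖) * F := by ring
end
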